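/- Let 𝔅 be a bornology with closed base on a metric space X. Then X satisfies S₁(Γ_{𝔅ˢ}, Γ_{𝔅ˢ}) if and only if X satisfies S_fin(Γ_{𝔅ˢ}, Γ_{𝔅ˢ}). -/

import Mathlib

open Set Metric Filter

/-- A bornology on a metric space: an ideal of subsets covering `X`. -/
structure BornologyOn (X : Type*) [MetricSpace X] where
  sets : Set (Set X)
  union_mem : ∀ {A B : Set X}, A ∈ sets → B ∈ sets → A ∪ B ∈ sets
  subset_mem : ∀ {A B : Set X}, A ∈ sets → B ⊆ A → B ∈ sets
  covers : ∀ x : X, ∃ A ∈ sets, x ∈ A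

variable {X : Type*} [MetricSpace X]

/-- `𝔅` has a closed base: a cofinal subfamily consisting of closed sets. -/
def HasClosedBase (𝔅 : BornologyOn X) : Prop :=
  ∃ base ⊆ 𝔅.sets, (∀ C ∈ base, IsClosed C) ∧ ∀ A ∈ 𝔅.sets, ∃ C ∈ base, A ⊆ C

/-- The `δ`-enlargement `B^δ = ⋃_{x ∈ B} S(x, δ)`. -/
def enlarge (B : Set X) (δ : ℝ) : Set X := ⋃ x ∈ B, ball x δ

/-- A `𝔅ˢ`-cover: `X ∉ 𝒰` and every `B ∈ 𝔅` has `B^δ ⊆ U` for some `U ∈ 𝒰`, `δ > 0`. -/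
def IsBCover (𝔅 : BornologyOn X) (𝒰 : Set (Set X)) : Prop :=
  univ ∉ 𝒰 ∧ ∀ B ∈ 𝔅.sets, ∃ U ∈ 𝒰, ∃ δ > 0, enlarge B δ ⊆ U

/-- An open `𝔅ˢ`-cover. -/
def IsOpenBCover (𝔅 : BornologyOn X) (𝒰 : Set (Set X)) : Prop :=
  (∀ U ∈ 𝒰, IsOpen U) ∧ (∀ x : X, ∃ U ∈ 𝒰, x ∈ U) ∧ IsBCover 𝔅 𝒰

/-- A `γ_{𝔅ˢ}`-cover (set form): infinite family of open sets such that for each `B ∈ 𝔅`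
all but finitely many members contain some enlargement of `B`. -/
def IsGammaBCover (𝔅 : BornologyOn X) (𝒰 : Set (Set X)) : Prop :=
  𝒰.Infinite ∧ (∀ U ∈ 𝒰, IsOpen U) ∧
    ∀ B ∈ 𝔅.sets, {U ∈ 𝒰 | ¬ ∃ δ > 0, enlarge B δ ⊆ U}.Finite

/-- A `γ_{𝔅ˢ}`-cover given as a sequence `{Uₙ}`: infinite, open, and for each `B ∈ 𝔅`
there are `n₀` and `δₙ > 0` with `B^{δₙ} ⊆ Uₙ` for all `n ≥ n₀`. -/
def IsGammaBSeq (𝔅 : BornologyOn X) (U : ℕ → Set X) : Prop :=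
  (Set.range U).Infinite ∧ (∀ n, IsOpen (U n)) ∧
    ∀ B ∈ 𝔅.sets, ∃ n₀, ∀ n ≥ n₀, ∃ δ > 0, enlarge B δ ⊆ U n

/-- A `γ`-cover: infinite family of open sets, every point in all but finitely many members. -/
def IsGammaCover (𝒰 : Set (Set X)) : Prop :=
  𝒰.Infinite ∧ (∀ U ∈ 𝒰, IsOpen U) ∧ ∀ x : X, {U ∈ 𝒰 | x ∉ U}.Finite

/-- An open cover of `X`. -/
def IsOpenCover (𝒰 : Set (Set X)) : Prop :=
  (∀ U ∈ 𝒰, IsOpen U) ∧ ∀ x : X, ∃ U ∈ 𝒰, x ∈ U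

/-- The family `𝒪_{𝔅ˢ}` of countable open `𝔅ˢ`-covers. -/
def OBs (𝔅 : BornologyOn X) : Set (Set (Set X)) :=
  {𝒰 | 𝒰.Countable ∧ IsOpenBCover 𝔅 𝒰}

/-- The family `Γ_{𝔅ˢ}` of countable `γ_{𝔅ˢ}`-covers. -/
def GBs (𝔅 : BornologyOn X) : Set (Set (Set X)) :=
  {𝒰 | 𝒰.Countable ∧ IsGammaBCover 𝔅 𝒰}

/-- The family `𝒪` of countable open covers. -/
def Ocov (X : Type*) [MetricSpace X] : Set (Set (Set X)) :=
  {𝒰 | 𝒰.Countable ∧ IsOpenCover 𝒰}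

/-- The selection principle `S₁(𝒜, ℬ)`. -/
def S1 (𝒜 ℬ : Set (Set (Set X))) : Prop :=
  ∀ 𝒰 : ℕ → Set (Set X), (∀ n, 𝒰 n ∈ 𝒜) →
    ∃ sel : ℕ → Set X, (∀ n, sel n ∈ 𝒰 n) ∧ Set.range sel ∈ ℬ

/-- The selection principle `S_fin(𝒜, ℬ)`. -/
def Sfin (𝒜 ℬ : Set (Set (Set X))) : Prop :=
  ∀ 𝒰 : ℕ → Set (Set X), (∀ n, 𝒰 n ∈ 𝒜) →
    ∃ 𝒱 : ℕ → Set (Set X), (∀ n, 𝒱 n ⊆ 𝒰 n ∧ (𝒱 n).Finite) ∧ (⋃ n, 𝒱 n) ∈ ℬ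

/-- The selection principle `U_fin(𝒜, ℬ)`. -/
def Ufin (𝒜 ℬ : Set (Set (Set X))) : Prop :=
  ∀ 𝒰 : ℕ → Set (Set X), (∀ n, 𝒰 n ∈ 𝒜) →
    ∃ 𝒱 : ℕ → Set (Set X), (∀ n, 𝒱 n ⊆ 𝒰 n ∧ (𝒱 n).Finite) ∧
      ((Set.range fun n => ⋃₀ 𝒱 n) ∈ ℬ ∨ ∃ n, ⋃₀ 𝒱 n = univ)

/-- ONE has a winning strategy in `G₁(𝒜, ℬ)`. -/
def OneWinsG1 (𝒜 ℬ : Set (Set (Set X))) : Prop :=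
  ∃ σ : List (Set X) → Set (Set X),
    (∀ h, σ h ∈ 𝒜) ∧
    ∀ play : ℕ → Set X,
      (∀ n, play n ∈ σ (List.ofFn fun i : Fin n => play i.1)) →
      Set.range play ∉ ℬ

/-- ONE has a winning strategy in `G_fin(𝒜, ℬ)`. -/
def OneWinsGfin (𝒜 ℬ : Set (Set (Set X))) : Prop :=
  ∃ σ : List (Set (Set X)) → Set (Set X),
    (∀ h, σ h ∈ 𝒜) ∧
    ∀ play : ℕ → Set (Set X),
      (∀ n, play n ⊆ σ (List.ofFn fun i : Fin n => play i.1) ∧ (play n).Finite) →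
      (⋃ n, play n) ∉ ℬ

/-- The winning condition in the `𝔅ˢ`-Hurewicz game / property: every `B ∈ 𝔅` is
eventually `δ`-enlarged into some member of `𝒱ₙ`. -/
def HurSel (𝔅 : BornologyOn X) (𝒱 : ℕ → Set (Set X)) : Prop :=
  ∀ B ∈ 𝔅.sets, ∃ n₀, ∀ n ≥ n₀, ∃ δ > 0, ∃ U ∈ 𝒱 n, enlarge B δ ⊆ U

/-- The strong `𝔅`-Hurewicz property. -/
def BsHurewicz (𝔅 : BornologyOn X) : Prop :=
  ∀ 𝒰 : ℕ → Set (Set X), (∀ n, 𝒰 n ∈ OBs 𝔅) →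
    ∃ 𝒱 : ℕ → Set (Set X), (∀ n, 𝒱 n ⊆ 𝒰 n ∧ (𝒱 n).Finite) ∧ HurSel 𝔅 𝒱

/-- ONE has a winning strategy in the `𝔅ˢ`-Hurewicz game. -/
def OneWinsHurewicz (𝔅 : BornologyOn X) : Prop :=
  ∃ σ : List (Set (Set X)) → Set (Set X),
    (∀ h, σ h ∈ OBs 𝔅) ∧
    ∀ play : ℕ → Set (Set X),
      (∀ n, play n ⊆ σ (List.ofFn fun i : Fin n => play i.1) ∧ (play n).Finite) →
      ¬ HurSel 𝔅 play

/-- A `𝔅ˢ`-groupable cover. -/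
def BsGroupable (𝔅 : BornologyOn X) (𝒰 : Set (Set X)) : Prop :=
  ∃ 𝒢 : ℕ → Set (Set X), (∀ n, (𝒢 n).Finite) ∧
    (∀ m n, m ≠ n → Disjoint (𝒢 m) (𝒢 n)) ∧ (⋃ n, 𝒢 n) = 𝒰 ∧ HurSel 𝔅 𝒢

/-- The family `𝒪_{𝔅ˢ}^{gp}` of `𝔅ˢ`-groupable open covers. -/
def OBsgp (𝔅 : BornologyOn X) : Set (Set (Set X)) :=
  {𝒰 | IsOpenCover 𝒰 ∧ BsGroupable 𝔅 𝒰}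

/-- The basic `τ_𝔅ˢ` neighbourhood `[B, ε]ˢ(f)` in `C(X)`. -/
def sball (f : C(X, ℝ)) (B : Set X) (ε : ℝ) : Set C(X, ℝ) :=
  {g | ∃ δ > 0, ∀ x ∈ enlarge B δ, |f x - g x| < ε}

/-- The topology `τ_𝔅ˢ` of strong uniform convergence on `𝔅` on `C(X)`. -/
def tauBs (𝔅 : BornologyOn X) : TopologicalSpace C(X, ℝ) :=
  TopologicalSpace.generateFrom
    {S | ∃ f : C(X, ℝ), ∃ B ∈ 𝔅.sets, ∃ ε > 0, S = sball f B ε}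

/-- Countable `T`-tightness of a topological space. -/
def CountableTTightness {Y : Type*} (t : TopologicalSpace Y) : Prop :=
  ∀ ρ : Cardinal.{0}, ρ.IsRegular → Cardinal.aleph0 < ρ →
    ∀ A : Ordinal.{0} → Set Y, (∀ α β, α ≤ β → A α ⊆ A β) →
      (∀ α, α < ρ.ord → @IsClosed _ t (A α)) →
      @IsClosed _ t (⋃ α ∈ {α | α < ρ.ord}, A α)


section Aux

lemma enlarge_mono {B : Set X} {δ δ' : ℝ} (h : δ ≤ δ') : enlarge B δ ⊆ enlarge B δ' :=
  iUnion₂_mono fun _ _ => ball_subset_ball h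

lemma good_biInter {B : Set X} (V : ℕ → Set X) (s : Finset ℕ)
    (h : ∀ i ∈ s, ∃ δ > 0, enlarge B δ ⊆ V i) :
    ∃ δ > 0, enlarge B δ ⊆ ⋂ i ∈ s, V i := by
  classical
  induction s using Finset.induction_on with
  | empty => exact ⟨1, one_pos, by simp⟩
  | @insert a s ha ih =>
    obtain ⟨δa, hδa, hsa⟩ := h _ (Finset.mem_insert_self _ _)
    obtain ⟨δs, hδs, hss⟩ := ih (fun i hi => h i (Finset.mem_insert_of_mem hi))
    refine ⟨min δa δs, lt_min hδa hδs, ?_⟩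
    rw [Finset.set_biInter_insert]
    exact subset_inter ((enlarge_mono (min_le_left _ _)).trans hsa)
      ((enlarge_mono (min_le_right _ _)).trans hss)

lemma exists_infinite_fiber' {α : Type*} (g : ℕ → α) (h : ¬ (Set.range g).Infinite) :
    ∃ V, {j | g j = V}.Infinite := by
  rw [Set.not_infinite] at h
  by_contra hno
  push_neg at hno
  have hfin : (univ : Set ℕ).Finite := by
    have hsub : (univ : Set ℕ) ⊆ ⋃ V ∈ range g, {j | g j = V} :=
      fun j _ => mem_biUnion (mem_range_self j) rfl
    exact (h.biUnion (fun V _ => hno V)).subset hsub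
  exact infinite_univ hfin

lemma eq_univ_of_good (𝔅 : BornologyOn X) {V : Set X}
    (h : ∀ B ∈ 𝔅.sets, ∃ δ > 0, enlarge B δ ⊆ V) : V = univ := by
  ext x
  simp only [mem_univ, iff_true]
  obtain ⟨B, hB, hx⟩ := 𝔅.covers x
  obtain ⟨δ, hδ, hsub⟩ := h B hB
  exact hsub (mem_biUnion hx (mem_ball_self hδ))

lemma enum_of_countable_infinite {α : Type*} {s : Set α} (hc : s.Countable) (hi : s.Infinite) :
    ∃ e : ℕ → α, Function.Injective e ∧ Set.range e = s := by
  have : Countable s := hc.to_subtype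
  have : Infinite s := hi.to_subtype
  obtain ⟨d⟩ := nonempty_denumerable s
  refine ⟨fun n => ((Denumerable.eqv s).symm n : α), ?_, ?_⟩
  · intro a b h
    exact (Denumerable.eqv s).symm.injective (Subtype.val_injective h)
  · ext x
    constructor
    · rintro ⟨n, rfl⟩; exact ((Denumerable.eqv s).symm n).2
    · intro hx; exact ⟨Denumerable.eqv s ⟨x, hx⟩, by simp⟩

lemma GBs_diff_univ (𝔅 : BornologyOn X) {𝒰 : Set (Set X)} (h : 𝒰 ∈ GBs 𝔅) :
    𝒰 \ {univ} ∈ GBs 𝔅 := by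
  obtain ⟨hc, hinf, hop, hbad⟩ := h
  refine ⟨hc.mono diff_subset, hinf.diff (finite_singleton _), fun U hU => hop U hU.1,
    fun B hB => (hbad B hB).subset ?_⟩
  rintro U ⟨hU, hb⟩
  exact ⟨hU.1, hb⟩

lemma natChain_succ {α : Type*} (g : α → α) (a : α) (k : ℕ) :
    (fun k => Nat.rec a (fun _ p => g p) k : ℕ → α) (k + 1)
      = g ((fun k => Nat.rec a (fun _ p => g p) k : ℕ → α) k) := rfl

end Aux

theorem stmt6 (𝔅 : BornologyOn X) (hcb : HasClosedBase 𝔅) :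
    S1 (GBs 𝔅) (GBs 𝔅) ↔ Sfin (GBs 𝔅) (GBs 𝔅) := by
  constructor
  · -- S1 → Sfin
    intro h1 𝒰 h𝒰
    obtain ⟨sel, hsel, hr⟩ := h1 𝒰 h𝒰
    refine ⟨fun n => {sel n}, fun n => ⟨singleton_subset_iff.mpr (hsel n), finite_singleton _⟩, ?_⟩
    have : (⋃ n, ({sel n} : Set (Set X))) = Set.range sel := by
      ext V; simp [eq_comm]
    rw [this]; exact hr
  · -- Sfin → S1
    intro hf 𝒰 h𝒰
    classical
    set 𝒰' : ℕ → Set (Set X) := fun n => 𝒰 n \ {univ} with h𝒰'def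
    have h' : ∀ n, 𝒰' n ∈ GBs 𝔅 := fun n => GBs_diff_univ 𝔅 (h𝒰 n)
    have hnu : ∀ n, (univ : Set X) ∉ 𝒰' n := fun n hn => hn.2 rfl
    -- injective enumerations
    have henum : ∀ n, ∃ e : ℕ → Set X, Function.Injective e ∧ Set.range e = 𝒰' n :=
      fun n => enum_of_countable_infinite (h' n).1 (h' n).2.1
    choose e he_inj he_range using henum
    have hUmem : ∀ i j, e i j ∈ 𝒰' i := fun i j => (he_range i) ▸ mem_range_self j
    -- diagonal intersections
    set W : ℕ → ℕ → Set X := fun n j => ⋂ i ∈ Finset.range (n + 1), e i j with hWdef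
    -- bad index control
    have hbadJ : ∀ B ∈ 𝔅.sets, ∀ n : ℕ, ∃ J : Set ℕ, J.Finite ∧
        ∀ j ∉ J, ∃ δ > 0, enlarge B δ ⊆ W n j := by
      intro B hB n
      refine ⟨⋃ i ∈ Finset.range (n + 1),
        (e i) ⁻¹' {A ∈ 𝒰' i | ¬ ∃ δ > 0, enlarge B δ ⊆ A}, ?_, ?_⟩
      · exact Set.Finite.biUnion (Finset.range (n + 1)).finite_toSet
          (fun i _ => Set.Finite.preimage (he_inj i).injOn ((h' i).2.2.2 B hB))
      · intro j hj
        refine good_biInter (fun i => e i j) _ (fun i hi => ?_)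
        by_contra hbad
        push_neg at hbad
        refine hj (mem_biUnion hi ?_)
        refine ⟨hUmem i j, ?_⟩
        intro ⟨δ, hδ, hsub⟩
        exact hbad δ hδ hsub
    -- each 𝒲 n is a γ_Bs cover
    have h𝒲 : ∀ n, Set.range (W n) ∈ GBs 𝔅 := by
      intro n
      refine ⟨countable_range _, ?_, ?_, ?_⟩
      · -- infinite
        by_contra hfin
        obtain ⟨V, hVinf⟩ := exists_infinite_fiber' (W n) hfin
        have hVgood : ∀ B ∈ 𝔅.sets, ∃ δ > 0, enlarge B δ ⊆ V := by
          intro B hB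
          obtain ⟨J, hJfin, hJ⟩ := hbadJ B hB n
          obtain ⟨j, hjV, hjJ⟩ := (hVinf.diff hJfin).nonempty
          exact hjV ▸ hJ j hjJ
        have hVuniv : V = univ := eq_univ_of_good 𝔅 hVgood
        obtain ⟨j, hj⟩ := hVinf.nonempty
        have h0 : (univ : Set X) ⊆ e 0 j := by
          rw [← hVuniv, ← hj]
          exact biInter_subset_of_mem (Finset.mem_range.mpr n.succ_pos)
        have : e 0 j = univ := eq_univ_of_univ_subset h0
        exact hnu 0 (this ▸ hUmem 0 j)
      · -- open
        rintro V ⟨j, rfl⟩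
        exact isOpen_biInter_finset (fun i _ => (h' i).2.2.1 _ (hUmem i j))
      · -- bad sets finite
        intro B hB
        obtain ⟨J, hJfin, hJ⟩ := hbadJ B hB n
        refine (hJfin.image (W n)).subset ?_
        rintro V ⟨⟨j, rfl⟩, hbad⟩
        by_cases hj : j ∈ J
        · exact mem_image_of_mem _ hj
        · exact absurd (hJ j hj) hbad
    -- apply Sfin
    obtain ⟨𝒢, h𝒢, hG⟩ := hf (fun n => Set.range (W n)) h𝒲
    set G : Set (Set X) := ⋃ n, 𝒢 n with hGdef
    -- key extraction step
    have key : ∀ N : ℕ, ∃ p : ℕ × Set X, N < p.1 ∧ p.2 ∈ 𝒢 p.1 ∧ ∀ m ≤ N, p.2 ∉ 𝒢 m := by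
      intro N
      have hAfin : (⋃ m ∈ Set.Iic N, 𝒢 m).Finite :=
        Set.Finite.biUnion (finite_Iic N) (fun m _ => (h𝒢 m).2)
      obtain ⟨V, hVG, hVn⟩ := (hG.2.1.diff hAfin).nonempty
      obtain ⟨m, hm⟩ : ∃ m, V ∈ 𝒢 m := mem_iUnion.mp hVG
      have hNm : N < m := by
        by_contra hc
        push_neg at hc
        exact hVn (mem_biUnion hc hm)
      exact ⟨(m, V), hNm, hm, fun m' hm' hmem => hVn (mem_biUnion hm' hmem)⟩
    set g : ℕ × Set X → ℕ × Set X := fun p => (key p.1).choose with hgdef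
    have hg : ∀ p : ℕ × Set X, p.1 < (g p).1 ∧ (g p).2 ∈ 𝒢 (g p).1 ∧
        ∀ m ≤ p.1, (g p).2 ∉ 𝒢 m := fun p => (key p.1).choose_spec
    set f : ℕ → ℕ × Set X := fun k => Nat.rec (key 0).choose (fun _ p => g p) k with hfdef
    have hfsucc : ∀ k, f (k + 1) = g (f k) := fun k => rfl
    have hmono : StrictMono fun k => (f k).1 :=
      strictMono_nat_of_lt_succ (fun k => by rw [hfsucc]; exact (hg (f k)).1)
    have hmem : ∀ k, (f k).2 ∈ 𝒢 (f k).1 := by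
      intro k
      cases k with
      | zero => exact (key 0).choose_spec.2.1
      | succ k => rw [hfsucc]; exact (hg (f k)).2.1
    have hnot : ∀ k m, m ≤ (f k).1 → (f (k + 1)).2 ∉ 𝒢 m := by
      intro k m hm
      rw [hfsucc]
      exact (hg (f k)).2.2 m hm
    have hinj : ∀ {k l : ℕ}, k < l → (f k).2 ≠ (f l).2 := by
      intro k l hkl
      obtain ⟨l', rfl⟩ : ∃ l', l = l' + 1 := ⟨l - 1, by omega⟩
      have hk : (f k).1 ≤ (f l').1 := hmono.monotone (by omega)
      intro he
      exact hnot l' _ hk (he ▸ hmem k)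
    have hWj : ∀ k, ∃ j, W (f k).1 j = (f k).2 := fun k => (h𝒢 (f k).1).1 (hmem k)
    choose jj hjj using hWj
    have hex : ∀ i : ℕ, ∃ k, i ≤ (f k).1 := fun i => ⟨i, hmono.le_apply⟩
    set ki : ℕ → ℕ := fun i => Nat.find (hex i) with hkidef
    set sel : ℕ → Set X := fun i => e i (jj (ki i)) with hseldef
    have hsel_le : ∀ i, i ≤ (f (ki i)).1 := fun i => Nat.find_spec (hex i)
    have hsub : ∀ i, (f (ki i)).2 ⊆ sel i := by
      intro i
      rw [← hjj (ki i)]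
      exact biInter_subset_of_mem (Finset.mem_range.mpr (Nat.lt_succ_of_le (hsel_le i)))
    have hselmem' : ∀ i, sel i ∈ 𝒰' i := fun i => hUmem i _
    -- cofinitely many links are good
    have hKgood : ∀ B ∈ 𝔅.sets, ∃ K : Set ℕ, K.Finite ∧
        ∀ k ∉ K, ∃ δ > 0, enlarge B δ ⊆ (f k).2 := by
      intro B hB
      have hGbad : {V ∈ G | ¬ ∃ δ > 0, enlarge B δ ⊆ V}.Finite := hG.2.2.2 B hB
      refine ⟨(fun k => (f k).2) ⁻¹' {V ∈ G | ¬ ∃ δ > 0, enlarge B δ ⊆ V}, ?_, ?_⟩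
      · refine Set.Finite.preimage ?_ hGbad
        intro a _ b _ hab
        by_contra hne
        rcases Nat.lt_or_ge a b with h | h
        · exact hinj h hab
        · exact hinj (by omega) hab.symm
      · intro k hk
        by_contra hbad
        push_neg at hbad
        refine hk ⟨mem_iUnion.mpr ⟨(f k).1, hmem k⟩, ?_⟩
        intro ⟨δ, hδ, hs⟩
        exact hbad δ hδ hs
    have hseli_good : ∀ B ∈ 𝔅.sets, ∀ K : Set ℕ,
        (∀ k ∉ K, ∃ δ > 0, enlarge B δ ⊆ (f k).2) →
        ∀ i, ki i ∉ K → ∃ δ > 0, enlarge B δ ⊆ sel i := by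
      intro B hB K hK i hki
      obtain ⟨δ, hδ, hs⟩ := hK (ki i) hki
      exact ⟨δ, hδ, hs.trans (hsub i)⟩
    refine ⟨sel, fun i => (hselmem' i).1, countable_range _, ?_, ?_, ?_⟩
    · -- infinite
      by_contra hfin
      obtain ⟨V, hVinf⟩ := exists_infinite_fiber' sel hfin
      have hVgood : ∀ B ∈ 𝔅.sets, ∃ δ > 0, enlarge B δ ⊆ V := by
        intro B hB
        obtain ⟨K, hKfin, hK⟩ := hKgood B hB
        have hIfin : (⋃ k ∈ K, {i | i ≤ (f k).1}).Finite :=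
          Set.Finite.biUnion hKfin (fun k _ => finite_Iic ((f k).1))
        obtain ⟨i, hiV, hiI⟩ := (hVinf.diff hIfin).nonempty
        have hkiK : ki i ∉ K := fun hc => hiI (mem_biUnion hc (hsel_le i))
        exact hiV ▸ hseli_good B hB K hK i hkiK
      have hVuniv : V = univ := eq_univ_of_good 𝔅 hVgood
      obtain ⟨i, hi⟩ := hVinf.nonempty
      exact hnu i (by rw [← hi] at hVuniv; exact hVuniv ▸ hselmem' i)
    · -- open
      rintro V ⟨i, rfl⟩
      exact (h' i).2.2.1 _ (hselmem' i)
    · -- bad sets finite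
      intro B hB
      obtain ⟨K, hKfin, hK⟩ := hKgood B hB
      have hIfin : (⋃ k ∈ K, {i | i ≤ (f k).1}).Finite :=
        Set.Finite.biUnion hKfin (fun k _ => finite_Iic ((f k).1))
      refine (hIfin.image sel).subset ?_
      rintro V ⟨⟨i, rfl⟩, hbad⟩
      by_cases hki : ki i ∈ K
      · exact mem_image_of_mem _ (mem_biUnion hki (hsel_le i))
      · exact absurd (hseli_good B hB K hK i hki) hbad
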